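/- (Plotkin-like bound for irregular Lee-distance codes) Let D be an M×M matrix of nonnegative integers and suppose there exist vectors p_1,…,p_M ∈ Z_q^r with d_L(p_i,p_j) ≥ D_{ij} for all i,j. Then r ≥ (8/(M²q)) ∑_{i<j} D_{ij} if q is even, and r ≥ (8q/(M²(q²−1))) ∑_{i<j} D_{ij} if q is odd. -/

import Mathlib

/-- Lee distance between two symbols of `ZMod q` (representatives in `{0,…,q-1}`). -/
def leeDistSym (q : ℕ) (x y : ZMod q) : ℕ := min (x - y).val (y - x).val

/-- Lee distance between two vectors over `ZMod q`. -/
def leeDist {q n : ℕ} (x y : Fin n → ZMod q) : ℕ := ∑ i, leeDistSym q (x i) (y i)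

/-- Lee weight of a symbol of `ZMod q`. -/
def leeWtSym (q : ℕ) (x : ZMod q) : ℕ := min x.val (q - x.val)

/-- Lee weight of a vector over `ZMod q`. -/
def leeWt {q n : ℕ} (x : Fin n → ZMod q) : ℕ := ∑ i, leeWtSym q (x i)

namespace PlotkinAux

/-- indicator of the interval `[1,s]` -/
def Hn (s v : ℕ) : ℚ := if 1 ≤ v ∧ v ≤ s then 1 else 0

lemma sum_zmod {q : ℕ} [NeZero q] (f : ZMod q → ℚ) :
    ∑ u : ZMod q, f u = ∑ v ∈ Finset.range q, f (v : ZMod q) := by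
  refine Finset.sum_nbij' (i := fun u : ZMod q => u.val)
    (j := fun v : ℕ => (v : ZMod q)) ?_ ?_ ?_ ?_ ?_
  · intro u _; exact Finset.mem_range.mpr (ZMod.val_lt u)
  · intro v _; exact Finset.mem_univ _
  · intro u _; exact ZMod.natCast_rightInverse u
  · intro v hv; exact ZMod.val_cast_of_lt (Finset.mem_range.mp hv)
  · intro u _
    rw [ZMod.natCast_rightInverse u]

lemma count_core {q : ℕ} (hq : 2 ≤ q) {s k : ℕ} (hs1 : q ≤ 2*s) (hs2 : 2*s ≤ q+1)
    (hk : k < q) :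
    ((Finset.range q).filter
      (fun v => (1 ≤ v ∧ v ≤ s) ∧ (1 ≤ (v+k)%q ∧ (v+k)%q ≤ s))).card
      = s - min k (q-k) := by
  have key : ∀ v, v < q → ((v + k) % q = v + k ∧ v + k < q)
      ∨ ((v+k) % q = v + k - q ∧ q ≤ v + k) := by
    intro v hv
    rcases lt_or_ge (v+k) q with h' | h'
    · exact Or.inl ⟨Nat.mod_eq_of_lt h', h'⟩
    · exact Or.inr ⟨by rw [Nat.mod_eq_sub_mod h', Nat.mod_eq_of_lt (by omega)], h'⟩
  rcases le_or_gt (2*k) q with h | h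
  · have hfe : ((Finset.range q).filter
      (fun v => (1 ≤ v ∧ v ≤ s) ∧ (1 ≤ (v+k)%q ∧ (v+k)%q ≤ s))) = Finset.Icc 1 (s-k) := by
      ext v
      simp only [Finset.mem_filter, Finset.mem_range, Finset.mem_Icc]
      constructor
      · rintro ⟨hv, h1, h2⟩
        rcases key v hv with ⟨h', h''⟩ | ⟨h', h''⟩ <;> rw [h'] at h2 <;> omega
      · intro hv
        have hvq : v < q := by omega
        rcases key v hvq with ⟨h', h''⟩ | ⟨h', h''⟩ <;> rw [h'] <;> omega
    rw [hfe, Nat.card_Icc]; omega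
  · have hfe : ((Finset.range q).filter
      (fun v => (1 ≤ v ∧ v ≤ s) ∧ (1 ≤ (v+k)%q ∧ (v+k)%q ≤ s))) = Finset.Icc (q+1-k) s := by
      ext v
      simp only [Finset.mem_filter, Finset.mem_range, Finset.mem_Icc]
      constructor
      · rintro ⟨hv, h1, h2⟩
        rcases key v hv with ⟨h', h''⟩ | ⟨h', h''⟩ <;> rw [h'] at h2 <;> omega
      · intro hv
        have hvq : v < q := by omega
        rcases key v hvq with ⟨h', h''⟩ | ⟨h', h''⟩ <;> rw [h'] <;> omega
    rw [hfe, Nat.card_Icc]; omega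

lemma sum_H_mul {q : ℕ} [NeZero q] (hq : 2 ≤ q) {s : ℕ} (hs1 : q ≤ 2*s) (hs2 : 2*s ≤ q+1)
    (a b : ZMod q) :
    ∑ e : ZMod q, Hn s (a - e).val * Hn s (b - e).val
      = (s : ℚ) - leeDistSym q a b := by
  set c := b - a with hc
  have h1 : ∑ e : ZMod q, Hn s (a - e).val * Hn s (b - e).val
      = ∑ u : ZMod q, Hn s u.val * Hn s (u + c).val := by
    rw [← (Equiv.subLeft a).sum_comp (fun u => Hn s u.val * Hn s (u + c).val)]
    refine Finset.sum_congr rfl fun e _ => ?_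
    simp only [Equiv.subLeft_apply]
    congr 2
    rw [hc]; ring
  rw [h1, sum_zmod]
  set k := c.val with hk
  have hkq : k < q := ZMod.val_lt c
  have h2 : ∑ v ∈ Finset.range q, (Hn s ((v:ZMod q)).val * Hn s ((v:ZMod q) + c).val)
      = ∑ v ∈ Finset.range q,
        (if (1 ≤ v ∧ v ≤ s) ∧ (1 ≤ (v+k)%q ∧ (v+k)%q ≤ s) then (1:ℚ) else 0) := by
    refine Finset.sum_congr rfl fun v hv => ?_
    have hv' : v < q := Finset.mem_range.mp hv
    have e1 : ((v : ZMod q)).val = v := ZMod.val_cast_of_lt hv'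
    have e2 : ((v : ZMod q) + c).val = (v + k) % q := by
      rw [ZMod.val_add, e1]
    rw [e1, e2]
    unfold Hn
    split_ifs <;> simp only [mul_one, mul_zero, zero_mul] <;> tauto
  rw [h2, Finset.sum_boole, count_core hq hs1 hs2 hkq]
  have hmin : min k (q - k) ≤ s := by omega
  have hlds : leeDistSym q a b = min k (q - k) := by
    unfold leeDistSym
    have hab : a - b = -c := by rw [hc]; ring
    have hba : b - a = c := hc.symm
    rw [hab, hba]
    by_cases h0 : c = 0
    · simp [h0, hk]
    · rw [ZMod.neg_val, if_neg h0, ← hk, min_comm]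
  rw [hlds]
  push_cast [Nat.cast_sub hmin]
  ring

lemma sum_H {q : ℕ} [NeZero q] (hq : 2 ≤ q) {s : ℕ} (hs1 : q ≤ 2*s) (hs2 : 2*s ≤ q+1)
    (a : ZMod q) :
    ∑ e : ZMod q, Hn s (a - e).val = (s : ℚ) := by
  have h := sum_H_mul hq hs1 hs2 a a
  have h2 : ∀ e : ZMod q, Hn s (a - e).val * Hn s (a - e).val = Hn s (a - e).val := by
    intro e; unfold Hn; split_ifs <;> norm_num
  rw [Finset.sum_congr rfl (fun e _ => h2 e)] at h
  have h3 : leeDistSym q a a = 0 := by unfold leeDistSym; simp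
  rw [h3] at h
  simpa using h

lemma coord_bound {q : ℕ} [NeZero q] (hq : 2 ≤ q) {s : ℕ} (hs1 : q ≤ 2*s) (hs2 : 2*s ≤ q+1)
    {M : ℕ} (x : Fin M → ZMod q) :
    ∑ i : Fin M, ∑ j : Fin M, (leeDistSym q (x i) (x j) : ℚ)
      ≤ (M:ℚ)^2 * s * ((q:ℚ) - s) / q := by
  set K : ZMod q → ℚ := fun e => ∑ i : Fin M, Hn s (x i - e).val with hK
  have hB1 : ∑ e : ZMod q, K e = (M:ℚ) * s := by
    rw [hK]
    rw [Finset.sum_comm]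
    rw [Finset.sum_congr rfl (fun i _ => sum_H hq hs1 hs2 (x i))]
    simp [mul_comm]
  have key : ∑ i : Fin M, ∑ j : Fin M, (leeDistSym q (x i) (x j) : ℚ)
      = (M:ℚ)^2 * s - ∑ e : ZMod q, (K e)^2 := by
    have hterm : ∀ i j : Fin M, (leeDistSym q (x i) (x j) : ℚ)
        = (s:ℚ) - ∑ e : ZMod q, Hn s (x i - e).val * Hn s (x j - e).val := by
      intro i j
      rw [sum_H_mul hq hs1 hs2 (x i) (x j)]; ring
    have hsw : ∑ i : Fin M, ∑ j : Fin M, ∑ e : ZMod q,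
          Hn s (x i - e).val * Hn s (x j - e).val
        = ∑ e : ZMod q, (K e)^2 := by
      calc ∑ i : Fin M, ∑ j : Fin M, ∑ e : ZMod q,
            Hn s (x i - e).val * Hn s (x j - e).val
          = ∑ i : Fin M, ∑ e : ZMod q, ∑ j : Fin M,
            Hn s (x i - e).val * Hn s (x j - e).val :=
            Finset.sum_congr rfl fun i _ => Finset.sum_comm
        _ = ∑ e : ZMod q, ∑ i : Fin M, ∑ j : Fin M,
            Hn s (x i - e).val * Hn s (x j - e).val := Finset.sum_comm
        _ = ∑ e : ZMod q, (K e)^2 := by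
            refine Finset.sum_congr rfl fun e _ => ?_
            rw [hK, sq, Finset.sum_mul_sum]
    calc ∑ i : Fin M, ∑ j : Fin M, (leeDistSym q (x i) (x j) : ℚ)
        = ∑ i : Fin M, ∑ j : Fin M,
            ((s:ℚ) - ∑ e : ZMod q, Hn s (x i - e).val * Hn s (x j - e).val) :=
          Finset.sum_congr rfl fun i _ => Finset.sum_congr rfl fun j _ => hterm i j
      _ = (M:ℚ)^2 * s - ∑ i : Fin M, ∑ j : Fin M, ∑ e : ZMod q,
            Hn s (x i - e).val * Hn s (x j - e).val := by
          simp only [Finset.sum_sub_distrib, Finset.sum_const, Finset.card_univ,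
            Fintype.card_fin, nsmul_eq_mul]
          ring
      _ = (M:ℚ)^2 * s - ∑ e : ZMod q, (K e)^2 := by rw [hsw]
  have hcs : ((M:ℚ) * s)^2 ≤ (q:ℚ) * ∑ e : ZMod q, (K e)^2 := by
    rw [← hB1]
    have := sq_sum_le_card_mul_sum_sq (s := (Finset.univ : Finset (ZMod q))) (f := K)
    simpa [ZMod.card] using this
  have hq0 : (0:ℚ) < q := by positivity
  rw [key, le_div_iff₀ hq0]
  nlinarith [hcs]

end PlotkinAux

lemma leeDist_symm {q n : ℕ} (x y : Fin n → ZMod q) : leeDist x y = leeDist y x := by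
  unfold leeDist leeDistSym
  exact Finset.sum_congr rfl fun k _ => min_comm _ _

open PlotkinAux in
theorem plotkin_like_bound_irregular_lee (q r M : ℕ) (hq : 2 ≤ q)
    (D : Fin M → Fin M → ℕ) (p : Fin M → Fin r → ZMod q)
    (hD : ∀ i j, D i j ≤ leeDist (p i) (p j)) :
    (Even q → (r : ℚ) ≥ 8 / ((M : ℚ) ^ 2 * q) *
        ∑ i : Fin M, ∑ j : Fin M, if i < j then (D i j : ℚ) else 0) ∧
    (Odd q → (r : ℚ) ≥ 8 * q / ((M : ℚ) ^ 2 * ((q : ℚ) ^ 2 - 1)) *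
        ∑ i : Fin M, ∑ j : Fin M, if i < j then (D i j : ℚ) else 0) := by
  haveI : NeZero q := ⟨by omega⟩
  set s : ℕ := (q+1)/2 with hsdef
  have hs1 : q ≤ 2*s := by omega
  have hs2 : 2*s ≤ q+1 := by omega
  set T : ℚ := ∑ i : Fin M, ∑ j : Fin M, if i < j then (D i j : ℚ) else 0 with hT
  have hq0 : (0:ℚ) < q := by positivity
  -- main inequality with cleared denominators
  have main : 2 * T * q ≤ (r:ℚ) * ((M:ℚ)^2 * s * ((q:ℚ) - s)) := by
    have h1 : 2*T ≤ ∑ i : Fin M, ∑ j : Fin M, (leeDist (p i) (p j) : ℚ) := by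
      have step : ∀ i j : Fin M,
          (if i < j then (D i j:ℚ) else 0) + (if j < i then (D j i:ℚ) else 0)
            ≤ (leeDist (p i) (p j) : ℚ) := by
        intro i j
        rcases lt_trichotomy i j with h|h|h
        · rw [if_pos h, if_neg (asymm h), add_zero]
          exact_mod_cast hD i j
        · rw [if_neg (by omega : ¬ i < j), if_neg (by omega : ¬ j < i), add_zero]
          positivity
        · rw [if_neg (asymm h), if_pos h, zero_add, leeDist_symm]
          exact_mod_cast hD j i
      have hT' : ∑ i : Fin M, ∑ j : Fin M, (if j < i then (D j i : ℚ) else 0) = T := by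
        rw [Finset.sum_comm]
      calc 2*T = T + T := by ring
        _ = T + ∑ i : Fin M, ∑ j : Fin M, (if j < i then (D j i : ℚ) else 0) := by
          rw [hT']
        _ = (∑ i : Fin M, ∑ j : Fin M, (if i < j then (D i j : ℚ) else 0))
            + ∑ i : Fin M, ∑ j : Fin M, (if j < i then (D j i : ℚ) else 0) := by
          rw [hT]
        _ = ∑ i : Fin M, ∑ j : Fin M,
            ((if i < j then (D i j:ℚ) else 0) + (if j < i then (D j i:ℚ) else 0)) := by
          rw [← Finset.sum_add_distrib]
          exact Finset.sum_congr rfl fun i _ => (Finset.sum_add_distrib).symm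
        _ ≤ ∑ i : Fin M, ∑ j : Fin M, (leeDist (p i) (p j) : ℚ) :=
          Finset.sum_le_sum fun i _ => Finset.sum_le_sum fun j _ => step i j
    have h2 : ∑ i : Fin M, ∑ j : Fin M, (leeDist (p i) (p j) : ℚ)
        = ∑ k : Fin r, ∑ i : Fin M, ∑ j : Fin M, (leeDistSym q (p i k) (p j k) : ℚ) := by
      calc ∑ i : Fin M, ∑ j : Fin M, (leeDist (p i) (p j) : ℚ)
          = ∑ i : Fin M, ∑ j : Fin M, ∑ k : Fin r, (leeDistSym q (p i k) (p j k) : ℚ) := by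
            refine Finset.sum_congr rfl fun i _ => Finset.sum_congr rfl fun j _ => ?_
            unfold leeDist; push_cast; rfl
        _ = ∑ i : Fin M, ∑ k : Fin r, ∑ j : Fin M, (leeDistSym q (p i k) (p j k) : ℚ) :=
            Finset.sum_congr rfl fun i _ => Finset.sum_comm
        _ = ∑ k : Fin r, ∑ i : Fin M, ∑ j : Fin M, (leeDistSym q (p i k) (p j k) : ℚ) :=
            Finset.sum_comm
    have h3 : ∑ k : Fin r, ∑ i : Fin M, ∑ j : Fin M, (leeDistSym q (p i k) (p j k) : ℚ)
        ≤ (r:ℚ) * ((M:ℚ)^2 * s * ((q:ℚ) - s) / q) := by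
      calc ∑ k : Fin r, ∑ i : Fin M, ∑ j : Fin M, (leeDistSym q (p i k) (p j k) : ℚ)
          ≤ ∑ _k : Fin r, ((M:ℚ)^2 * s * ((q:ℚ) - s) / q) :=
            Finset.sum_le_sum fun k _ => coord_bound hq hs1 hs2 (fun i => p i k)
        _ = (r:ℚ) * ((M:ℚ)^2 * s * ((q:ℚ) - s) / q) := by
            simp [Finset.sum_const, mul_comm]
    have h4 : 2*T ≤ (r:ℚ) * ((M:ℚ)^2 * s * ((q:ℚ) - s) / q) := by
      calc 2*T ≤ _ := h1
        _ = _ := h2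
        _ ≤ _ := h3
    calc 2*T*q = (2*T)*q := by ring
      _ ≤ ((r:ℚ) * ((M:ℚ)^2 * s * ((q:ℚ) - s) / q)) * q := by
          exact mul_le_mul_of_nonneg_right h4 (le_of_lt hq0)
      _ = (r:ℚ) * ((M:ℚ)^2 * s * ((q:ℚ) - s)) := by field_simp
  have hr0 : (0:ℚ) ≤ r := by positivity
  rcases Nat.eq_zero_or_pos M with hM0 | hM1
  · subst hM0
    have hT0 : T = 0 := by
      rw [hT]
      simp
    constructor <;> intro _ <;> rw [ge_iff_le, hT0, mul_zero] <;> exact hr0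
  · have hMq : (0:ℚ) < (M:ℚ)^2 := by
      have : (0:ℚ) < (M:ℚ) := by exact_mod_cast hM1
      positivity
    have hs0 : (0:ℚ) < s := by
      have : 1 ≤ s := by omega
      exact_mod_cast Nat.lt_of_lt_of_le Nat.zero_lt_one this
    constructor
    · intro hqe
      have h2s : 2*s = q := by
        obtain ⟨c, hc⟩ := hqe; omega
      have hq2s : (q:ℚ) = 2*s := by exact_mod_cast h2s.symm
      rw [ge_iff_le, div_mul_eq_mul_div, div_le_iff₀ (by positivity)]
      -- goal : 8 * T ≤ r * (M^2 * q)
      have key : 4*T*s ≤ ((r:ℚ) * (M:ℚ)^2 * s) * s := by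
        have h := main
        rw [hq2s] at h
        ring_nf at h ⊢
        linarith
      have key2 : 4*T ≤ (r:ℚ) * (M:ℚ)^2 * s := by
        rw [← mul_le_mul_iff_of_pos_right hs0]
        exact key
      rw [hq2s]
      ring_nf
      ring_nf at key2
      linarith
    · intro hqo
      have h2s : 2*s = q+1 := by
        obtain ⟨c, hc⟩ := hqo; omega
      have hq2s : (q:ℚ) = 2*s - 1 := by
        have h : ((2*s : ℕ) : ℚ) = ((q+1 : ℕ) : ℚ) := by rw [h2s]
        push_cast at h; linarith
      have hid : (q:ℚ)^2 - 1 = 4*(s*((q:ℚ)-s)) := by rw [hq2s]; ring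
      have h2q : (2:ℚ) ≤ (q:ℚ) := by exact_mod_cast hq
      have hq21 : (0:ℚ) < (q:ℚ)^2 - 1 := by nlinarith
      rw [ge_iff_le, div_mul_eq_mul_div, div_le_iff₀ (by positivity)]
      rw [hid]
      ring_nf
      ring_nf at main
      linarith
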